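/- Let N ≥ 2, let Γ : Fin N → ℝ, and let k : Fin N → ℂ be pairwise distinct and nonzero points such that for every m, (i/(2π k_m)) ∑_{n≠m} Γ_n / (conj(k_m) − conj(k_n)) = A + iB for fixed real constants A ≠ 0 and B. Define z_m(t) = k_m · √(2At + 1) · exp(i (B/(2A)) log(2At + 1)). Then on the interval {t : 2At + 1 > 0}, z satisfies the point-vortex system dz_m/dt = (−1/(2πi)) ∑_{n≠m} Γ_n / (conj(z_m) − conj(z_n)). -/

import Mathlib

open Finset ComplexConjugate

/-- If the configuration `k` is self-similar with constant `C = A + iB`, `A ≠ 0`, then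
`z_m(t) = k_m √(2At+1) exp(i (B/(2A)) log(2At+1))` solves the point-vortex system on
`{t : 2At + 1 > 0}`. -/
theorem self_similar_solution_formula (N : ℕ) (hN : 2 ≤ N) (Γ : Fin N → ℝ)
    (k : Fin N → ℂ)
    (hk : ∀ m n : Fin N, m ≠ n → k m ≠ k n) (hk0 : ∀ m, k m ≠ 0)
    (A B : ℝ) (hA : A ≠ 0)
    (hss : ∀ m : Fin N,
      Complex.I / (2 * (Real.pi : ℂ) * k m) *
          ∑ n ∈ Finset.univ.erase m, (Γ n : ℂ) / (conj (k m) - conj (k n))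
        = (A : ℂ) + (B : ℂ) * Complex.I)
    (z : ℝ → Fin N → ℂ)
    (hz : ∀ t m, z t m = k m * (Real.sqrt (2 * A * t + 1) : ℂ) *
      Complex.exp (Complex.I * ((B / (2 * A) : ℝ) : ℂ) *
        ((Real.log (2 * A * t + 1) : ℝ) : ℂ))) :
    ∀ t : ℝ, 0 < 2 * A * t + 1 → ∀ m : Fin N,
      HasDerivAt (fun s => z s m)
        (-1 / (2 * (Real.pi : ℂ) * Complex.I) *
          ∑ n ∈ Finset.univ.erase m, (Γ n : ℂ) / (conj (z t m) - conj (z t n))) t := by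
  intro t ht m
  have hr0 : (2 * A * t + 1) ≠ 0 := ht.ne'
  set c : ℂ := ((B / (2 * A) : ℝ) : ℂ) with hc
  set sR : ℝ := Real.sqrt (2 * A * t + 1) with hsRdef
  have hsR0 : sR ≠ 0 := by rw [hsRdef]; positivity
  have hsRC : (sR : ℂ) ≠ 0 := by exact_mod_cast hsR0
  set E : ℂ := Complex.exp (Complex.I * c * ((Real.log (2 * A * t + 1) : ℝ) : ℂ)) with hEdef
  have hE0 : E ≠ 0 := Complex.exp_ne_zero _
  have hπ : (Real.pi : ℂ) ≠ 0 := by exact_mod_cast Real.pi_ne_zero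
  have hAC : (A : ℂ) ≠ 0 := by exact_mod_cast hA
  have hkm : k m ≠ 0 := hk0 m
  have hsr2 : (sR : ℂ) * (sR : ℂ) = 2 * (A : ℂ) * (t : ℂ) + 1 := by
    have : sR * sR = 2 * A * t + 1 := by rw [hsRdef, Real.mul_self_sqrt ht.le]
    exact_mod_cast this
  -- derivative pieces
  have hg : HasDerivAt (fun s : ℝ => 2 * A * s + 1) (2 * A) t := by
    simpa using ((hasDerivAt_id t).const_mul (2 * A)).add_const 1
  have hsq : HasDerivAt (fun s : ℝ => ((Real.sqrt (2 * A * s + 1) : ℝ) : ℂ))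
      ((1 / (2 * sR) * (2 * A) : ℝ) : ℂ) t :=
    ((Real.hasDerivAt_sqrt hr0).comp t hg).ofReal_comp
  have hlog : HasDerivAt (fun s : ℝ => ((Real.log (2 * A * s + 1) : ℝ) : ℂ))
      (((2 * A * t + 1)⁻¹ * (2 * A) : ℝ) : ℂ) t :=
    by have h := ((Real.hasDerivAt_log hr0).comp t hg).ofReal_comp; exact h
  have hexp : HasDerivAt
      (fun s : ℝ => Complex.exp (Complex.I * c * ((Real.log (2 * A * s + 1) : ℝ) : ℂ)))
      (Complex.I * c * (((2 * A * t + 1)⁻¹ * (2 * A) : ℝ) : ℂ) * E) t := by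
    simpa [hEdef, mul_assoc, mul_comm, mul_left_comm] using (hlog.const_mul (Complex.I * c)).cexp
  have hder : HasDerivAt (fun s => z s m)
      ((k m * ((1 / (2 * sR) * (2 * A) : ℝ) : ℂ)) * E +
        (k m * (sR : ℂ)) * (Complex.I * c * (((2 * A * t + 1)⁻¹ * (2 * A) : ℝ) : ℂ) * E)) t := by
    simp only [hz]
    exact (hsq.const_mul (k m)).mul hexp
  -- value of the sum
  have hS : ∑ n ∈ Finset.univ.erase m, (Γ n : ℂ) / (conj (k m) - conj (k n))
      = ((A : ℂ) + (B : ℂ) * Complex.I) * (2 * (Real.pi : ℂ) * k m) / Complex.I := by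
    have h := hss m
    rw [div_mul_eq_mul_div, div_eq_iff (by simp [hπ, hkm] : 2 * (Real.pi : ℂ) * k m ≠ 0)] at h
    rw [eq_div_iff Complex.I_ne_zero]
    linear_combination h
  -- conjugates
  have hconj : ∀ n : Fin N, conj (z t n) = conj (k n) * ((sR : ℂ) * E⁻¹) := by
    intro n
    rw [hz]
    simp only [map_mul, Complex.conj_ofReal, hEdef, ← Complex.exp_conj, Complex.conj_I, hc,
      neg_mul, Complex.exp_neg]
    ring
  have hsum : ∑ n ∈ Finset.univ.erase m, (Γ n : ℂ) / (conj (z t m) - conj (z t n))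
      = (∑ n ∈ Finset.univ.erase m, (Γ n : ℂ) / (conj (k m) - conj (k n))) / ((sR : ℂ) * E⁻¹) := by
    rw [Finset.sum_div]
    refine Finset.sum_congr rfl fun n _ => ?_
    rw [hconj, hconj, ← sub_mul, div_div]
  have key : -1 / (2 * (Real.pi : ℂ) * Complex.I) *
      ∑ n ∈ Finset.univ.erase m, (Γ n : ℂ) / (conj (z t m) - conj (z t n))
      = (k m * ((1 / (2 * sR) * (2 * A) : ℝ) : ℂ)) * E +
        (k m * (sR : ℂ)) * (Complex.I * c * (((2 * A * t + 1)⁻¹ * (2 * A) : ℝ) : ℂ) * E) := by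
    have claim1 : -1 / (2 * (Real.pi : ℂ) * Complex.I) *
        ∑ n ∈ Finset.univ.erase m, (Γ n : ℂ) / (conj (z t m) - conj (z t n))
        = k m * (((A : ℂ) + (B : ℂ) * Complex.I) * E / (sR : ℂ)) := by
      rw [hsum, hS]
      field_simp
      ring_nf
      linear_combination (-(A : ℂ) - Complex.I * (B : ℂ)) * Complex.I_sq
    have claim2 : (k m * ((1 / (2 * sR) * (2 * A) : ℝ) : ℂ)) * E +
        (k m * (sR : ℂ)) * (Complex.I * c * (((2 * A * t + 1)⁻¹ * (2 * A) : ℝ) : ℂ) * E)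
        = k m * (((A : ℂ) + (B : ℂ) * Complex.I) * E / (sR : ℂ)) := by
      have hR : (2 * A * t + 1 : ℝ) = sR * sR := (Real.mul_self_sqrt ht.le).symm
      rw [hc, hR]
      push_cast
      field_simp
    rw [claim1, claim2]
  rw [key]
  exact hder
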